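/- The function u*(x₁,x₂) = max{0, x₁ − 2/3, x₂ − 2/3, x₁ + x₂ − (4−√2)/3} satisfies Rev_0(u*) = (2/27)(6 + √2), which equals Opt(0). -/

import Mathlib

open MeasureTheory Real Set

/-- Partial derivative of `u` with respect to the first coordinate
(defined via `deriv`; for Lipschitz `u` it exists a.e. by Rademacher). -/
noncomputable def pd1 (u : ℝ × ℝ → ℝ) (x : ℝ × ℝ) : ℝ := deriv (fun t => u (t, x.2)) x.1

/-- Partial derivative of `u` with respect to the second coordinate. -/
noncomputable def pd2 (u : ℝ × ℝ → ℝ) (x : ℝ × ℝ) : ℝ := deriv (fun t => u (x.1, t)) x.2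

/-- The square `[c, c+1]²`. -/
def box (c : ℝ) : Set (ℝ × ℝ) := Icc c (c + 1) ×ˢ Icc c (c + 1)

/-- The revenue of the (relaxed) mechanism induced by utility `u`:
`∫_{[c,c+1]²} (x₁ ∂u/∂x₁ + x₂ ∂u/∂x₂ − u)`. -/
noncomputable def Rev (c : ℝ) (u : ℝ × ℝ → ℝ) : ℝ :=
  ∫ x in box c, (x.1 * pd1 u x + x.2 * pd2 u x - u x)

/-- `Opt(c)`, the optimal value of the convexity-relaxed program for `0 ≤ c ≤ c̄`. -/
noncomputable def Opt (c : ℝ) : ℝ :=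
  2 / 27 * ((Real.sqrt 2 - 4) * c ^ 3
    + 3 * (Real.sqrt (c * (3 * c + 2)) + Real.sqrt 2 + 1) * c ^ 2
    + (2 * Real.sqrt (c * (3 * c + 2)) + 3 * Real.sqrt 2 + 12) * c
    + Real.sqrt 2 + 6)

/-- `BRev(c)`, the best full-bundling revenue. -/
noncomputable def BRev (c : ℝ) : ℝ :=
  2 / 27 * (-4 * c ^ 3 + Real.sqrt 2 * Real.sqrt ((2 * c ^ 2 + 3) ^ 3) + 18 * c)

/-- The critical constant `c̄ = √(15 − 8√2) − 2√2 + 1 ≈ 0.0915`. -/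
noncomputable def cbar : ℝ := Real.sqrt (15 - 8 * Real.sqrt 2) - 2 * Real.sqrt 2 + 1


noncomputable def aa : ℝ := (4 - Real.sqrt 2) / 3
noncomputable def bb : ℝ := (2 - Real.sqrt 2) / 3
noncomputable def uu : ℝ × ℝ → ℝ := fun x =>
  max (max 0 (x.1 - 2 / 3)) (max (x.2 - 2 / 3) (x.1 + x.2 - (4 - Real.sqrt 2) / 3))

lemma s2_lt : Real.sqrt 2 < 3/2 := by
  nlinarith [Real.sq_sqrt (by norm_num : (2:ℝ) ≥ 0), Real.sqrt_nonneg 2]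
lemma s2_gt : 1 < Real.sqrt 2 := by
  nlinarith [Real.sq_sqrt (by norm_num : (2:ℝ) ≥ 0), Real.sqrt_nonneg 2]

lemma bb_pos : 0 < bb := by unfold bb; linarith [s2_lt]
lemma bb_lt : bb < 2/3 := by unfold bb; linarith [s2_gt]
lemma aa_eq : aa = 2/3 + bb := by unfold aa bb; ring
lemma aa_lt1 : aa < 1 := by unfold aa; linarith [s2_gt]
lemma uu_def (x : ℝ × ℝ) :
    uu x = max (max 0 (x.1 - 2/3)) (max (x.2 - 2/3) (x.1 + x.2 - aa)) := rfl

lemma uu_R0 {x1 x2 : ℝ} (h1 : x1 ≤ 2/3) (h2 : x2 ≤ 2/3) (h3 : x1 + x2 ≤ aa) :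
    uu (x1, x2) = 0 := by
  rw [uu_def]
  rw [max_eq_left (by simp; linarith : x1 - 2/3 ≤ (0:ℝ)),
    max_eq_left (max_le (by simp; linarith) (by simp; linarith))]

lemma uu_R1 {x1 x2 : ℝ} (h1 : 2/3 ≤ x1) (h2 : x2 ≤ bb) :
    uu (x1, x2) = x1 - 2/3 := by
  have hb := bb_lt; have ha := aa_eq
  rw [uu_def]
  rw [max_eq_right (by simp; linarith : (0:ℝ) ≤ x1 - 2/3),
    max_eq_left (max_le (by simp; linarith) (by simp; linarith))]

lemma uu_R2 {x1 x2 : ℝ} (h1 : 2/3 ≤ x2) (h2 : x1 ≤ bb) :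
    uu (x1, x2) = x2 - 2/3 := by
  have hb := bb_lt; have ha := aa_eq
  rw [uu_def]
  rw [max_eq_left (by simp; linarith : x1 + x2 - aa ≤ x2 - 2/3),
    max_eq_left (by simp; linarith : x1 - 2/3 ≤ (0:ℝ)),
    max_eq_right (by simp; linarith : (0:ℝ) ≤ x2 - 2/3)]

lemma uu_R3 {x1 x2 : ℝ} (h1 : bb ≤ x1) (h2 : bb ≤ x2) (h3 : aa ≤ x1 + x2) :
    uu (x1, x2) = x1 + x2 - aa := by
  have hb := bb_pos; have ha := aa_eq
  rw [uu_def]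
  rw [max_eq_right (by simp; linarith : x2 - 2/3 ≤ x1 + x2 - aa),
    max_eq_right (max_le (by simp; linarith) (by simp; linarith))]

lemma intg_R0 {x : ℝ × ℝ} (h1 : x.1 < 2/3) (h2 : x.2 < 2/3) (h3 : x.1 + x.2 < aa) :
    x.1 * pd1 uu x + x.2 * pd2 uu x - uu x = 0 := by
  have e1 : pd1 uu x = 0 := by
    have hev : (fun t => uu (t, x.2)) =ᶠ[nhds x.1] (fun _ => (0:ℝ)) := by
      filter_upwards [Iio_mem_nhds (show x.1 < min (2/3) (aa - x.2) from lt_min h1 (by linarith))] with t ht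
      have ht' : t < min (2/3) (aa - x.2) := ht
      exact uu_R0 (by have := lt_of_lt_of_le ht' (min_le_left _ _); linarith) h2.le
        (by have := lt_of_lt_of_le ht' (min_le_right _ _); linarith)
    rw [pd1, hev.deriv_eq, deriv_const]
  have e2 : pd2 uu x = 0 := by
    have hev : (fun t => uu (x.1, t)) =ᶠ[nhds x.2] (fun _ => (0:ℝ)) := by
      filter_upwards [Iio_mem_nhds (show x.2 < min (2/3) (aa - x.1) from lt_min h2 (by linarith))] with t ht
      have ht' : t < min (2/3) (aa - x.1) := ht
      exact uu_R0 h1.le (by have := lt_of_lt_of_le ht' (min_le_left _ _); linarith)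
        (by have := lt_of_lt_of_le ht' (min_le_right _ _); linarith)
    rw [pd2, hev.deriv_eq, deriv_const]
  have e3 : uu x = 0 := uu_R0 h1.le h2.le h3.le
  rw [e1, e2, e3]; ring

lemma intg_R1 {x : ℝ × ℝ} (h1 : 2/3 < x.1) (h2 : x.2 < bb) :
    x.1 * pd1 uu x + x.2 * pd2 uu x - uu x = 2/3 := by
  have e1 : pd1 uu x = 1 := by
    have hev : (fun t => uu (t, x.2)) =ᶠ[nhds x.1] (fun t => t - 2/3) := by
      filter_upwards [Ioi_mem_nhds h1] with t ht
      exact uu_R1 (le_of_lt ht) h2.le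
    rw [pd1, hev.deriv_eq]
    simp
  have e2 : pd2 uu x = 0 := by
    have hev : (fun t => uu (x.1, t)) =ᶠ[nhds x.2] (fun _ => x.1 - 2/3) := by
      filter_upwards [Iio_mem_nhds h2] with t ht
      exact uu_R1 h1.le ht.le
    rw [pd2, hev.deriv_eq, deriv_const]
  have e3 : uu x = x.1 - 2/3 := uu_R1 h1.le h2.le
  rw [e1, e2, e3]; ring

lemma intg_R2 {x : ℝ × ℝ} (h1 : 2/3 < x.2) (h2 : x.1 < bb) :
    x.1 * pd1 uu x + x.2 * pd2 uu x - uu x = 2/3 := by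
  have e1 : pd1 uu x = 0 := by
    have hev : (fun t => uu (t, x.2)) =ᶠ[nhds x.1] (fun _ => x.2 - 2/3) := by
      filter_upwards [Iio_mem_nhds h2] with t ht
      exact uu_R2 h1.le ht.le
    rw [pd1, hev.deriv_eq, deriv_const]
  have e2 : pd2 uu x = 1 := by
    have hev : (fun t => uu (x.1, t)) =ᶠ[nhds x.2] (fun t => t - 2/3) := by
      filter_upwards [Ioi_mem_nhds h1] with t ht
      exact uu_R2 (le_of_lt ht) h2.le
    rw [pd2, hev.deriv_eq]
    simp
  have e3 : uu x = x.2 - 2/3 := uu_R2 h1.le h2.le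
  rw [e1, e2, e3]; ring

lemma intg_R3 {x : ℝ × ℝ} (h1 : bb < x.1) (h2 : bb < x.2) (h3 : aa < x.1 + x.2) :
    x.1 * pd1 uu x + x.2 * pd2 uu x - uu x = aa := by
  have e1 : pd1 uu x = 1 := by
    have hev : (fun t => uu (t, x.2)) =ᶠ[nhds x.1] (fun t => t + x.2 - aa) := by
      filter_upwards [Ioi_mem_nhds (show max bb (aa - x.2) < x.1 from max_lt h1 (by linarith))] with t ht
      have ht' : max bb (aa - x.2) < t := ht
      exact uu_R3 (by have := lt_of_le_of_lt (le_max_left bb (aa - x.2)) ht'; linarith) h2.le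
        (by have := lt_of_le_of_lt (le_max_right bb (aa - x.2)) ht'; linarith)
    rw [pd1, hev.deriv_eq]
    have : (fun t : ℝ => t + x.2 - aa) = (fun t : ℝ => t + (x.2 - aa)) := by ext t; ring
    rw [this]; simp
  have e2 : pd2 uu x = 1 := by
    have hev : (fun t => uu (x.1, t)) =ᶠ[nhds x.2] (fun t => x.1 + t - aa) := by
      filter_upwards [Ioi_mem_nhds (show max bb (aa - x.1) < x.2 from max_lt h2 (by linarith))] with t ht
      have ht' : max bb (aa - x.1) < t := ht
      exact uu_R3 h1.le (by have := lt_of_le_of_lt (le_max_left bb (aa - x.1)) ht'; linarith)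
        (by have := lt_of_le_of_lt (le_max_right bb (aa - x.1)) ht'; linarith)
    rw [pd2, hev.deriv_eq]
    have : (fun t : ℝ => x.1 + t - aa) = (fun t : ℝ => t + (x.1 - aa)) := by ext t; ring
    rw [this]; simp
  have e3 : uu x = x.1 + x.2 - aa := uu_R3 h1.le h2.le h3.le
  rw [e1, e2, e3]; ring

noncomputable def gg : ℝ × ℝ → ℝ := fun x =>
  if bb < x.1 ∧ bb < x.2 ∧ aa < x.1 + x.2 then aa
  else if (2/3 < x.1 ∧ x.2 < bb) ∨ (2/3 < x.2 ∧ x.1 < bb) then 2/3 else 0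

lemma gg_eq {x : ℝ × ℝ} (h1 : x.1 ≠ 2/3) (h2 : x.2 ≠ 2/3) (h3 : x.1 ≠ bb)
    (h4 : x.2 ≠ bb) (h5 : x.1 + x.2 ≠ aa) :
    x.1 * pd1 uu x + x.2 * pd2 uu x - uu x = gg x := by
  have hb0 := bb_pos; have hb1 := bb_lt; have ha := aa_eq
  rcases h1.lt_or_gt with c1 | c1
  · rcases h2.lt_or_gt with c2 | c2
    · rcases h5.lt_or_gt with c5 | c5
      · rw [intg_R0 c1 c2 c5, gg]
        rw [if_neg (by push_neg; intro _ _; linarith),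
          if_neg (by push_neg; constructor <;> intro h <;> linarith)]
      · have d1 : bb < x.1 := by
          rcases h3.lt_or_gt with d | d
          · linarith
          · exact d
        have d2 : bb < x.2 := by
          rcases h4.lt_or_gt with d | d
          · linarith
          · exact d
        rw [intg_R3 d1 d2 c5, gg, if_pos ⟨d1, d2, c5⟩]
    · rcases h3.lt_or_gt with c3 | c3
      · rw [intg_R2 c2 c3, gg, if_neg (by push_neg; intro h; linarith),
          if_pos (Or.inr ⟨c2, c3⟩)]
      · have c5 : aa < x.1 + x.2 := by linarith
        rw [intg_R3 c3 (by linarith) c5, gg, if_pos ⟨c3, by linarith, c5⟩]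
  · rcases h4.lt_or_gt with c4 | c4
    · rw [intg_R1 c1 c4, gg, if_neg (by push_neg; intro _ h; linarith),
        if_pos (Or.inl ⟨c1, c4⟩)]
    · have c5 : aa < x.1 + x.2 := by linarith
      rw [intg_R3 (by linarith) c4 c5, gg, if_pos ⟨by linarith, c4, c5⟩]

lemma line1_null (c : ℝ) : volume {x : ℝ × ℝ | x.1 = c} = 0 := by
  have : {x : ℝ × ℝ | x.1 = c} = ({c} : Set ℝ) ×ˢ (univ : Set ℝ) := by
    ext ⟨y1, y2⟩; simp [Set.mem_prod, eq_comm]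
  rw [this, Measure.volume_eq_prod, Measure.prod_prod, measure_singleton, zero_mul]

lemma line2_null (c : ℝ) : volume {x : ℝ × ℝ | x.2 = c} = 0 := by
  have : {x : ℝ × ℝ | x.2 = c} = (univ : Set ℝ) ×ˢ ({c} : Set ℝ) := by
    ext ⟨y1, y2⟩; simp [Set.mem_prod, eq_comm]
  rw [this, Measure.volume_eq_prod, Measure.prod_prod, measure_singleton, mul_zero]

lemma diag_null (c : ℝ) : volume {x : ℝ × ℝ | x.1 + x.2 = c} = 0 := by
  have hm : MeasurableSet {x : ℝ × ℝ | x.1 + x.2 = c} :=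
    measurableSet_eq_fun (by fun_prop) measurable_const
  rw [Measure.volume_eq_prod]
  rw [Measure.measure_prod_null hm]
  filter_upwards with a
  have : Prod.mk a ⁻¹' {x : ℝ × ℝ | x.1 + x.2 = c} = {c - a} := by
    ext y; simp; constructor <;> intro h <;> linarith
  simp [this]

lemma intOn_const_Icc {c : ℝ} : IntegrableOn (fun _ : ℝ => c) (Icc 0 1) volume :=
  (integrableOn_const_iff).mpr (Or.inr measure_Icc_lt_top)

lemma inner_A {x1 : ℝ} (hx1 : x1 < bb) :
    ∫ x2 in Icc (0:ℝ) 1, gg (x1, x2) = 2/9 := by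
  have hb1 := bb_lt
  have hfun : ∀ x2 : ℝ, gg (x1, x2) = (Ioi (2/3) : Set ℝ).indicator (fun _ => (2:ℝ)/3) x2 := by
    intro x2
    by_cases h : (2:ℝ)/3 < x2
    · rw [gg]; simp only []
      rw [if_neg (by push_neg; intro h'; linarith), if_pos (Or.inr ⟨h, hx1⟩),
        Set.indicator_of_mem (mem_Ioi.mpr h)]
    · rw [gg]; simp only []
      rw [if_neg (by push_neg; intro h'; linarith),
        if_neg (by push_neg; constructor <;> intro h' <;> linarith),
        Set.indicator_of_notMem (by simpa using h)]
  rw [setIntegral_congr_fun measurableSet_Icc (fun x2 _ => hfun x2),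
    setIntegral_indicator measurableSet_Ioi]
  have : Icc (0:ℝ) 1 ∩ Ioi (2/3) = Ioc (2/3) 1 := by
    ext y; simp only [mem_inter_iff, mem_Icc, mem_Ioi, mem_Ioc]
    constructor
    · rintro ⟨⟨_, h2⟩, h3⟩; exact ⟨h3, h2⟩
    · rintro ⟨h1, h2⟩; exact ⟨⟨by linarith, h2⟩, h1⟩
  rw [this, setIntegral_const, Real.volume_real_Ioc_of_le (by norm_num)]
  norm_num

lemma inner_B {x1 : ℝ} (hx1 : bb < x1) (hx1' : x1 ≤ 2/3) :
    ∫ x2 in Icc (0:ℝ) 1, gg (x1, x2) = aa * (1 - (aa - x1)) := by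
  have hb0 := bb_pos; have hb1 := bb_lt; have ha := aa_eq; have ha1 := aa_lt1
  have hkey : bb ≤ aa - x1 := by linarith
  have hfun : ∀ x2 : ℝ, gg (x1, x2) = (Ioi (aa - x1) : Set ℝ).indicator (fun _ => aa) x2 := by
    intro x2
    by_cases h : aa - x1 < x2
    · rw [gg]; simp only []
      rw [if_pos ⟨hx1, by linarith, by linarith⟩, Set.indicator_of_mem (mem_Ioi.mpr h)]
    · rw [gg]; simp only []
      rw [if_neg (by push_neg; intro _ _; linarith),
        if_neg (by push_neg; constructor <;> intro h' <;> linarith),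
        Set.indicator_of_notMem (by simpa using h)]
  rw [setIntegral_congr_fun measurableSet_Icc (fun x2 _ => hfun x2),
    setIntegral_indicator measurableSet_Ioi]
  have : Icc (0:ℝ) 1 ∩ Ioi (aa - x1) = Ioc (aa - x1) 1 := by
    ext y; simp only [mem_inter_iff, mem_Icc, mem_Ioi, mem_Ioc]
    constructor
    · rintro ⟨⟨_, h2⟩, h3⟩; exact ⟨h3, h2⟩
    · rintro ⟨h1, h2⟩; exact ⟨⟨by linarith, h2⟩, h1⟩
  rw [this, setIntegral_const, Real.volume_real_Ioc_of_le (by linarith)]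
  rw [smul_eq_mul]; ring

lemma inner_C {x1 : ℝ} (hx1 : 2/3 < x1) :
    ∫ x2 in Icc (0:ℝ) 1, gg (x1, x2) = aa * (1 - bb) + 2/3 * bb := by
  have hb0 := bb_pos; have hb1 := bb_lt; have ha := aa_eq; have ha1 := aa_lt1
  have hfun : ∀ x2 : ℝ, gg (x1, x2) =
      (Ioi bb : Set ℝ).indicator (fun _ => aa) x2
        + (Iio bb : Set ℝ).indicator (fun _ => (2:ℝ)/3) x2 := by
    intro x2
    rcases lt_trichotomy x2 bb with h | h | h
    · rw [gg]; simp only []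
      rw [if_neg (by push_neg; intro _ h'; linarith), if_pos (Or.inl ⟨hx1, h⟩),
        Set.indicator_of_notMem (by simp [h.not_gt] : x2 ∉ Ioi bb),
        Set.indicator_of_mem (mem_Iio.mpr h)]
      ring
    · subst h
      rw [gg]; simp only []
      rw [if_neg (by push_neg; intro _ h'; linarith),
        if_neg (by push_neg; constructor <;> intro h' <;> linarith),
        Set.indicator_of_notMem (by simp), Set.indicator_of_notMem (by simp)]
      ring
    · rw [gg]; simp only []
      rw [if_pos ⟨by linarith, h, by linarith⟩,
        Set.indicator_of_mem (mem_Ioi.mpr h),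
        Set.indicator_of_notMem (by simp [h.not_gt] : x2 ∉ Iio bb)]
      ring
  rw [setIntegral_congr_fun measurableSet_Icc (fun x2 _ => hfun x2)]
  rw [integral_add ((intOn_const_Icc (c := aa)).indicator measurableSet_Ioi)
    ((intOn_const_Icc (c := (2:ℝ)/3)).indicator measurableSet_Iio)]
  rw [setIntegral_indicator measurableSet_Ioi, setIntegral_indicator measurableSet_Iio]
  have e1 : Icc (0:ℝ) 1 ∩ Ioi bb = Ioc bb 1 := by
    ext y; simp only [mem_inter_iff, mem_Icc, mem_Ioi, mem_Ioc]
    constructor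
    · rintro ⟨⟨_, h2⟩, h3⟩; exact ⟨h3, h2⟩
    · rintro ⟨h1, h2⟩; exact ⟨⟨by linarith, h2⟩, h1⟩
  have e2 : Icc (0:ℝ) 1 ∩ Iio bb = Ico 0 bb := by
    ext y; simp only [mem_inter_iff, mem_Icc, mem_Iio, mem_Ico]
    constructor
    · rintro ⟨⟨h1, _⟩, h3⟩; exact ⟨h1, h3⟩
    · rintro ⟨h1, h2⟩; exact ⟨⟨h1, by linarith⟩, h2⟩
  rw [e1, e2, setIntegral_const, setIntegral_const, Real.volume_real_Ioc_of_le (by linarith),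
    Real.volume_real_Ico_of_le (by linarith)]
  rw [smul_eq_mul, smul_eq_mul]; ring

lemma gg_meas : Measurable gg := by
  apply Measurable.ite
  · exact MeasurableSet.inter (measurableSet_lt measurable_const measurable_fst)
      (MeasurableSet.inter (measurableSet_lt measurable_const measurable_snd)
        (measurableSet_lt measurable_const (measurable_fst.add measurable_snd)))
  · exact measurable_const
  · apply Measurable.ite _ measurable_const measurable_const
    exact MeasurableSet.union
      (MeasurableSet.inter (measurableSet_lt measurable_const measurable_fst)
        (measurableSet_lt measurable_snd measurable_const))
      (MeasurableSet.inter (measurableSet_lt measurable_const measurable_snd)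
        (measurableSet_lt measurable_fst measurable_const))

lemma aa_pos : 0 < aa := by have := aa_eq; have := bb_pos; linarith

lemma gg_intOn : IntegrableOn gg (Icc (0:ℝ) 1 ×ˢ Icc (0:ℝ) 1) volume := by
  apply Measure.integrableOn_of_bounded (M := 1)
  · exact ((isCompact_Icc.prod isCompact_Icc).measure_lt_top).ne
  · exact gg_meas.aestronglyMeasurable
  · filter_upwards with x
    have h1 := aa_pos; have h2 := aa_lt1
    rw [gg]
    split_ifs <;> rw [Real.norm_eq_abs, abs_of_nonneg (by linarith)] <;> linarith

lemma ae_ne (c : ℝ) : ∀ᵐ x : ℝ, x ≠ c := by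
  rw [ae_iff]
  have : {x : ℝ | ¬ x ≠ c} = {c} := by ext y; simp
  rw [this, measure_singleton]

lemma main_ae : ∀ᵐ x : ℝ × ℝ, x.1 * pd1 uu x + x.2 * pd2 uu x - uu x = gg x := by
  have hN : volume ({x : ℝ × ℝ | x.1 = 2/3} ∪ {x | x.2 = 2/3} ∪ {x | x.1 = bb}
      ∪ {x | x.2 = bb} ∪ {x | x.1 + x.2 = aa}) = 0 := by
    refine measure_union_null (measure_union_null (measure_union_null
      (measure_union_null ?_ ?_) ?_) ?_) ?_
    exacts [line1_null _, line2_null _, line1_null _, line2_null _, diag_null _]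
  have h : ∀ᵐ x : ℝ × ℝ, x ∉ ({x : ℝ × ℝ | x.1 = 2/3} ∪ {x | x.2 = 2/3} ∪ {x | x.1 = bb}
      ∪ {x | x.2 = bb} ∪ {x | x.1 + x.2 = aa}) := by
    rw [ae_iff]
    simp only [not_not, setOf_mem_eq]
    exact hN
  filter_upwards [h] with x hx
  simp only [mem_union, mem_setOf_eq, not_or] at hx
  exact gg_eq hx.1.1.1.1 hx.1.1.1.2 hx.1.1.2 hx.1.2 hx.2

lemma outer_piece1 : ∫ x in Ioc (0:ℝ) bb, (∫ x2 in Icc (0:ℝ) 1, gg (x, x2))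
    = bb * (2/9) := by
  rw [integral_Ioc_eq_integral_Ioo,
    setIntegral_congr_fun measurableSet_Ioo (fun x hx => inner_A hx.2),
    setIntegral_const, Real.volume_real_Ioo_of_le (by linarith [bb_pos])]
  rw [smul_eq_mul]; ring

lemma outer_piece2 : ∫ x in Ioc bb (2/3:ℝ), (∫ x2 in Icc (0:ℝ) 1, gg (x, x2))
    = (aa - aa^2) * (2/3 - bb) + aa * ((2/3)^2 - bb^2) / 2 := by
  rw [setIntegral_congr_fun measurableSet_Ioc (fun x hx => inner_B hx.1 hx.2)]
  have hle : bb ≤ 2/3 := bb_lt.le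
  rw [← intervalIntegral.integral_of_le hle]
  have : ∀ x : ℝ, aa * (1 - (aa - x)) = (aa - aa^2) + aa * x := by intro x; ring
  simp_rw [this]
  rw [intervalIntegral.integral_add intervalIntegrable_const
    ((show Continuous fun x : ℝ => aa * x by fun_prop).intervalIntegrable _ _),
    intervalIntegral.integral_const, intervalIntegral.integral_const_mul,
    _root_.integral_id]
  rw [smul_eq_mul]; ring

lemma outer_piece3 : ∫ x in Ioc (2/3:ℝ) 1, (∫ x2 in Icc (0:ℝ) 1, gg (x, x2))
    = (1/3) * (aa * (1 - bb) + 2/3 * bb) := by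
  rw [setIntegral_congr_fun measurableSet_Ioc (fun x hx => inner_C hx.1),
    setIntegral_const, Real.volume_real_Ioc_of_le (by norm_num)]
  rw [smul_eq_mul]; norm_num

/-- The utility `u*(x₁,x₂) = max{0, x₁ − 2/3, x₂ − 2/3, x₁ + x₂ − (4−√2)/3}`
satisfies `Rev_0(u*) = (2/27)(6 + √2) = Opt(0)`. -/
theorem revenue_of_pavlov_mechanism_at_zero :
    Rev 0 (fun x : ℝ × ℝ =>
        max (max 0 (x.1 - 2 / 3)) (max (x.2 - 2 / 3) (x.1 + x.2 - (4 - Real.sqrt 2) / 3)))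
      = 2 / 27 * (6 + Real.sqrt 2) ∧
    (2 : ℝ) / 27 * (6 + Real.sqrt 2) = Opt 0 := by
  have hb0 := bb_pos; have hb1 := bb_lt
  constructor
  · show Rev 0 uu = 2 / 27 * (6 + Real.sqrt 2)
    have step1 : Rev 0 uu = ∫ x in box 0, gg x := by
      rw [Rev]
      exact integral_congr_ae (ae_restrict_of_ae main_ae)
    have hbox : box 0 = Icc (0:ℝ) 1 ×ˢ Icc (0:ℝ) 1 := by rw [box]; norm_num
    have hInt := gg_intOn
    rw [Measure.volume_eq_prod] at hInt
    have step2 : ∫ x in box 0, gg x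
        = ∫ x1 in Icc (0:ℝ) 1, ∫ x2 in Icc (0:ℝ) 1, gg (x1, x2) := by
      rw [hbox, Measure.volume_eq_prod, setIntegral_prod gg hInt]
    have i1 : IntegrableOn (fun x1 => ∫ x2 in Icc (0:ℝ) 1, gg (x1, x2)) (Ioc 0 bb) := by
      apply Integrable.congr ((integrableOn_const_iff).mpr (Or.inr measure_Ioc_lt_top) :
        IntegrableOn (fun _ : ℝ => (2:ℝ)/9) (Ioc 0 bb) volume)
      refine (ae_restrict_iff' measurableSet_Ioc).mpr ?_
      filter_upwards [ae_ne bb] with x hxne hxmem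
      exact (inner_A (lt_of_le_of_ne hxmem.2 hxne)).symm
    have i2 : IntegrableOn (fun x1 => ∫ x2 in Icc (0:ℝ) 1, gg (x1, x2)) (Ioc bb (2/3)) := by
      apply Integrable.congr
        ((show Continuous fun x : ℝ => aa * (1 - (aa - x)) by fun_prop).integrableOn_Ioc)
      exact (ae_restrict_iff' measurableSet_Ioc).mpr
        (Filter.Eventually.of_forall fun x hx => (inner_B hx.1 hx.2).symm)
    have i3 : IntegrableOn (fun x1 => ∫ x2 in Icc (0:ℝ) 1, gg (x1, x2)) (Ioc (2/3) 1) := by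
      apply Integrable.congr ((integrableOn_const_iff).mpr (Or.inr measure_Ioc_lt_top) :
        IntegrableOn (fun _ : ℝ => aa * (1 - bb) + 2/3 * bb) (Ioc (2/3) 1) volume)
      exact (ae_restrict_iff' measurableSet_Ioc).mpr
        (Filter.Eventually.of_forall fun x hx => (inner_C hx.1).symm)
    have disj1 : Disjoint (Ioc (0:ℝ) bb) (Ioc bb (2/3) ∪ Ioc (2/3) 1) := by
      rw [Set.disjoint_left]
      rintro x ⟨_, hxb⟩ (⟨h, _⟩ | ⟨h, _⟩) <;> linarith
    have disj2 : Disjoint (Ioc bb (2/3:ℝ)) (Ioc (2/3) 1) := by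
      rw [Set.disjoint_left]
      rintro x ⟨_, hxb⟩ ⟨h, _⟩; linarith
    have e : Ioc (0:ℝ) 1 = Ioc 0 bb ∪ (Ioc bb (2/3) ∪ Ioc (2/3) 1) := by
      rw [Ioc_union_Ioc_eq_Ioc hb1.le (by norm_num), Ioc_union_Ioc_eq_Ioc hb0.le
        (by linarith)]
    have step3 : ∫ x1 in Icc (0:ℝ) 1, ∫ x2 in Icc (0:ℝ) 1, gg (x1, x2)
        = bb * (2/9) + ((aa - aa^2) * (2/3 - bb) + aa * ((2/3)^2 - bb^2) / 2
          + (1/3) * (aa * (1 - bb) + 2/3 * bb)) := by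
      rw [integral_Icc_eq_integral_Ioc, e,
        setIntegral_union disj1 (measurableSet_Ioc.union measurableSet_Ioc) i1 (i2.union i3),
        setIntegral_union disj2 measurableSet_Ioc i2 i3,
        outer_piece1, outer_piece2, outer_piece3]
    rw [step1, step2, step3]
    have hs : Real.sqrt 2 ^ 2 = 2 := Real.sq_sqrt (by norm_num)
    unfold aa bb
    linear_combination (-(Real.sqrt 2)/54) * hs
  · rw [Opt]
    norm_num [Real.sqrt_zero]
    ring
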